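/- Define κ(λ, p, q) = 0 if q = 0 and κ(λ, p, q) = -((p + sqrt(p² + λ‖q‖⁴))/‖q‖²)·q if q ≠ 0, for λ > 0, p ∈ ℝ, q ∈ ℝ^m. Then for every p ∈ ℝ and q ∈ ℝ^m, p + ⟨q, κ(λ, p, q)⟩ ≤ max(p, 0)·(if q = 0 then 1 else 0) - (if q ≠ 0 then sqrt(p² + λ‖q‖⁴) else 0); in particular, if p < 0 whenever q = 0, then p + ⟨q, κ(λ, p, q)⟩ < 0 for all (p, q) ≠ (0, 0). -/

import Mathlib

open Classical
open Real

theorem sontag_formula_negativity (m : ℕ) (lam : ℝ) (hlam : 0 < lam)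
    (κ : ℝ → ℝ → EuclideanSpace ℝ (Fin m) → EuclideanSpace ℝ (Fin m))
    (hκ : ∀ (p : ℝ) (q : EuclideanSpace ℝ (Fin m)),
      κ lam p q = if q = 0 then 0
        else -((p + Real.sqrt (p ^ 2 + lam * ‖q‖ ^ 4)) / ‖q‖ ^ 2) • q) :
    (∀ (p : ℝ) (q : EuclideanSpace ℝ (Fin m)),
        p + inner ℝ q (κ lam p q) ≤
          max p 0 * (if q = 0 then (1 : ℝ) else 0) -
            (if q ≠ 0 then Real.sqrt (p ^ 2 + lam * ‖q‖ ^ 4) else 0)) ∧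
      (∀ (p : ℝ) (q : EuclideanSpace ℝ (Fin m)),
        (q = 0 → p < 0) → (p, q) ≠ (0, 0) → p + inner ℝ q (κ lam p q) < 0) := by
  have key : ∀ (p : ℝ) (q : EuclideanSpace ℝ (Fin m)), q ≠ 0 →
      p + inner ℝ q (κ lam p q) = -Real.sqrt (p ^ 2 + lam * ‖q‖ ^ 4) := by
    intro p q hq
    have hn : ‖q‖ ^ 2 ≠ 0 := pow_ne_zero _ (norm_ne_zero_iff.mpr hq)
    rw [hκ, if_neg hq, real_inner_smul_right, real_inner_self_eq_norm_sq]
    field_simp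
    ring
  constructor
  · intro p q
    by_cases hq : q = 0
    · subst hq
      simp [hκ, le_max_left]
    · rw [key p q hq]
      simp [hq]
  · intro p q h0 hne
    by_cases hq : q = 0
    · have hp := h0 hq
      subst hq
      simpa [hκ] using hp
    · rw [key p q hq]
      have : 0 < p ^ 2 + lam * ‖q‖ ^ 4 := by
        have : 0 < ‖q‖ := norm_pos_iff.mpr hq
        positivity
      simpa using Real.sqrt_pos.mpr this
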